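/- Let a, b be odd integers with a ≥ 3, b ≥ 1, set c₀ = a·log(2)/b and ξ = log(a)/log(2) with continued fraction convergents pₙ/qₙ. For any cycle Ω of T with K odd elements, and any n ≥ 1, K ≥ min(qₙ, c₀·min(Ω₁)/(qₙ + q_{n+1})), where Ω₁ is the set of odd elements of Ω. -/

import Mathlib

/-- With `c₀ = a log 2 / b`, `ξ = log a / log 2` with continued-fraction
convergents `pₙ/qₙ`, any cycle `Ω` of `T` with `K` odd elements satisfies, for all
`n ≥ 1`, `K ≥ min (qₙ, c₀ · min Ω₁ / (qₙ + q_{n+1}))`. -/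
theorem cycle_length_lower_bound
    (a b : ℤ) (ha : Odd a) (hb : Odd b) (ha3 : 3 ≤ a) (hb1 : 1 ≤ b)
    (T : ℤ → ℤ) (hT : ∀ n, T n = if n % 2 = 0 then n / 2 else (a * n + b) / 2)
    (ξ : ℝ) (hξ : ξ = Real.log a / Real.log 2)
    (p : ℕ → ℤ) (q : ℕ → ℕ) (hqmono : StrictMono q) (hq0 : q 0 = 1)
    -- best-approximation property of the convergents pₙ/qₙ of ξ
    (hbest : ∀ n : ℕ, ∀ p' : ℤ, ∀ q' : ℕ, 1 ≤ q' → q' < q n →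
      |(p n : ℝ) - (q n : ℝ) * ξ| < |(p' : ℝ) - (q' : ℝ) * ξ|)
    (hlow : ∀ n : ℕ, (1 : ℝ) / (q n + q (n + 1)) < |(p n : ℝ) - (q n : ℝ) * ξ|)
    (Ω : Finset ℤ) (hpos : ∀ x ∈ Ω, 0 < x) (hcycle : Ω.image T = Ω)
    (Ω₁ : Finset ℤ) (hΩ₁ : Ω₁ = Ω.filter (fun x => Odd x)) (hne : Ω₁.Nonempty)
    (K : ℕ) (hK : K = Ω₁.card)
    (c₀ : ℝ) (hc₀ : c₀ = a * Real.log 2 / b) :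
    ∀ n : ℕ, 1 ≤ n →
      (K : ℝ) ≥ min (q n : ℝ) (c₀ * (Ω₁.min' hne : ℝ) / ((q n : ℝ) + (q (n + 1) : ℝ))) := by
  have hlog2 : (0:ℝ) < Real.log 2 := Real.log_pos one_lt_two
  have ha0 : (0:ℤ) < a := by linarith
  have haR : (1:ℝ) < (a:ℝ) := by exact_mod_cast by linarith
  have hbR : (0:ℝ) < (b:ℝ) := by exact_mod_cast hb1
  have hloga : (0:ℝ) < Real.log a := Real.log_pos haR
  set m : ℤ := Ω₁.min' hne with hm
  have hsub : Ω₁ ⊆ Ω := by rw [hΩ₁]; exact Finset.filter_subset _ _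
  have hmΩ : m ∈ Ω₁ := Finset.min'_mem _ _
  have hm1 : 1 ≤ m := hpos m (hsub hmΩ)
  have hmR : (1:ℝ) ≤ (m:ℝ) := by exact_mod_cast hm1
  have hx1 : ∀ x ∈ Ω₁, (0:ℤ) < x := fun x hx => hpos x (hsub hx)
  have hmx : ∀ x ∈ Ω₁, m ≤ x := fun x hx => Finset.min'_le _ _ hx
  -- injectivity of T on the cycle
  have hinj : Set.InjOn T ↑Ω := Finset.injOn_of_card_image_eq (by rw [hcycle])
  -- product identity
  have hprod : ∏ x ∈ Ω, T x = ∏ x ∈ Ω, x := by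
    conv_rhs => rw [← hcycle,
      Finset.prod_image (fun x hx y hy h => hinj (by exact_mod_cast hx) (by exact_mod_cast hy) h)]
  have h2T : ∀ x ∈ Ω, 2 * T x = if Odd x then a * x + b else x := by
    intro x hx
    rw [hT]
    rcases Int.even_or_odd x with he | ho
    · rw [if_pos (Int.even_iff.mp he), if_neg (by simpa using (Int.not_odd_iff_even.mpr he))]
      exact Int.mul_ediv_cancel' he.two_dvd
    · rw [if_neg (by simpa [Int.odd_iff] using ho), if_pos ho]
      exact Int.mul_ediv_cancel' ((ha.mul ho).add_odd hb).two_dvd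
  have key : (2:ℤ) ^ Ω.card * ∏ x ∈ Ω₁, x = ∏ x ∈ Ω₁, (a * x + b) := by
    have h1 : ∏ x ∈ Ω, (2 * T x) = 2 ^ Ω.card * ∏ x ∈ Ω, x := by
      rw [Finset.prod_mul_distrib, Finset.prod_const, hprod]
    have h2 : ∏ x ∈ Ω, (2 * T x)
        = (∏ x ∈ Ω₁, (a * x + b)) * ∏ x ∈ Ω.filter (fun x => ¬ Odd x), x := by
      rw [Finset.prod_congr rfl h2T,
        ← Finset.prod_filter_mul_prod_filter_not Ω (fun x => Odd x), hΩ₁]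
      congr 1
      · exact Finset.prod_congr rfl (fun x hx => if_pos (Finset.mem_filter.mp hx).2)
      · exact Finset.prod_congr rfl (fun x hx => if_neg (Finset.mem_filter.mp hx).2)
    have h3 : ∏ x ∈ Ω, x = (∏ x ∈ Ω₁, x) * ∏ x ∈ Ω.filter (fun x => ¬ Odd x), x := by
      rw [← Finset.prod_filter_mul_prod_filter_not Ω (fun x => Odd x), hΩ₁]
    have hP : (∏ x ∈ Ω.filter (fun x => ¬ Odd x), x) ≠ 0 := by
      refine ne_of_gt (Finset.prod_pos fun x hx => hpos x (Finset.filter_subset _ _ hx))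
    have := h1.symm.trans h2
    rw [h3] at this
    exact mul_right_cancel₀ hP (by linarith [this] <;> ring_nf)
  -- real version and logs
  have keyR : (2:ℝ) ^ Ω.card * ∏ x ∈ Ω₁, (x:ℝ) = ∏ x ∈ Ω₁, ((a:ℝ) * x + b) := by
    have := congrArg (fun z : ℤ => (z:ℝ)) key
    push_cast at this
    exact this
  have hxR : ∀ x ∈ Ω₁, (0:ℝ) < (x:ℝ) := fun x hx => by exact_mod_cast hx1 x hx
  have haxR : ∀ x ∈ Ω₁, (0:ℝ) < (a:ℝ) * x + b := fun x hx => by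
    have := hxR x hx; nlinarith
  have haxR' : ∀ x ∈ Ω₁, (0:ℝ) < (a:ℝ) * x := fun x hx => by
    have := hxR x hx; nlinarith
  have hlogeq : (Ω.card : ℝ) * Real.log 2 + ∑ x ∈ Ω₁, Real.log x
      = ∑ x ∈ Ω₁, Real.log ((a:ℝ) * x + b) := by
    have := congrArg Real.log keyR
    rwa [Real.log_mul (by positivity) (ne_of_gt (Finset.prod_pos hxR)),
      Real.log_pow, Real.log_prod (fun x hx => ne_of_gt (hxR x hx)),
      Real.log_prod (fun x hx => ne_of_gt (haxR x hx))] at this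
  have hsum : (Ω.card : ℝ) * Real.log 2 - K * Real.log a
      = ∑ x ∈ Ω₁, (Real.log ((a:ℝ) * x + b) - Real.log ((a:ℝ) * x)) := by
    have hax : ∑ x ∈ Ω₁, Real.log ((a:ℝ) * x)
        = K * Real.log a + ∑ x ∈ Ω₁, Real.log x := by
      rw [Finset.sum_congr rfl (fun x hx => Real.log_mul (by positivity) (ne_of_gt (hxR x hx))),
        Finset.sum_add_distrib, Finset.sum_const, hK]
      simp [nsmul_eq_mul]
    rw [Finset.sum_sub_distrib, hax]
    linarith [hlogeq]
  -- bounds on the sum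
  have hD_pos : 0 < (Ω.card : ℝ) * Real.log 2 - K * Real.log a := by
    rw [hsum]
    refine Finset.sum_pos (fun x hx => ?_) hne
    have := haxR' x hx
    exact sub_pos.mpr (Real.log_lt_log this (by linarith))
  have hD_le : (Ω.card : ℝ) * Real.log 2 - K * Real.log a ≤ K * ((b:ℝ) / (a * m)) := by
    rw [hsum]
    have hterm : ∀ x ∈ Ω₁, Real.log ((a:ℝ) * x + b) - Real.log ((a:ℝ) * x)
        ≤ (b:ℝ) / (a * m) := by
      intro x hx
      have hax := haxR' x hx
      have h1 : Real.log ((a:ℝ) * x + b) - Real.log ((a:ℝ) * x)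
          = Real.log (((a:ℝ) * x + b) / ((a:ℝ) * x)) := by
        rw [Real.log_div (ne_of_gt (haxR x hx)) (ne_of_gt hax)]
      have h2 : Real.log (((a:ℝ) * x + b) / ((a:ℝ) * x)) ≤ ((a:ℝ) * x + b) / ((a:ℝ) * x) - 1 :=
        Real.log_le_sub_one_of_pos (by positivity)
      have h3 : ((a:ℝ) * x + b) / ((a:ℝ) * x) - 1 = (b:ℝ) / ((a:ℝ) * x) := by
        rw [div_sub_one (ne_of_gt hax)]; ring
      have hmxR : (m:ℝ) ≤ (x:ℝ) := by exact_mod_cast hmx x hx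
      have h4 : (b:ℝ) / ((a:ℝ) * x) ≤ (b:ℝ) / ((a:ℝ) * m) := by
        gcongr
      linarith
    calc ∑ x ∈ Ω₁, (Real.log ((a:ℝ) * x + b) - Real.log ((a:ℝ) * x))
        ≤ ∑ _x ∈ Ω₁, (b:ℝ) / (a * m) := Finset.sum_le_sum hterm
      _ = K * ((b:ℝ) / (a * m)) := by rw [Finset.sum_const, hK, nsmul_eq_mul]
  -- in terms of ξ
  have hcm : (0:ℝ) < c₀ * m := by
    rw [hc₀]
    have : (0:ℝ) < (a:ℝ) := by linarith
    positivity
  have haR0 : (a:ℝ) ≠ 0 := by positivity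
  have hmR0 : (m:ℝ) ≠ 0 := by positivity
  have hxi2 : (K:ℝ) * ξ * Real.log 2 = K * Real.log a := by
    rw [hξ]; field_simp
  have hDxi_pos : 0 < (Ω.card : ℝ) - K * ξ := by
    nlinarith [hD_pos, hlog2, hxi2]
  have hDxi_le : (Ω.card : ℝ) - K * ξ ≤ K / (c₀ * m) := by
    have h5 : (K:ℝ) / (c₀ * m) * Real.log 2 = K * ((b:ℝ) / (a * m)) := by
      rw [hc₀]
      field_simp
    nlinarith [hD_le, hlog2, hxi2, h5]
  have hK1 : 1 ≤ K := by rw [hK]; exact Finset.card_pos.mpr hne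
  -- main case split
  intro n hn
  rcases le_or_gt (q n) K with h | h
  · calc min (q n : ℝ) (c₀ * (m:ℝ) / ((q n : ℝ) + (q (n+1) : ℝ)))
        ≤ (q n : ℝ) := min_le_left _ _
      _ ≤ (K : ℝ) := by exact_mod_cast h
  · have hbestn := hbest n (Ω.card : ℤ) K hK1 h
    have hlown := hlow n
    have habs : |((Ω.card : ℤ) : ℝ) - (K : ℝ) * ξ| = (Ω.card : ℝ) - K * ξ := by
      rw [abs_of_pos]; · push_cast; ring
      · push_cast; linarith [hDxi_pos]
    have hchain : (1:ℝ) / ((q n : ℝ) + (q (n+1) : ℝ)) < K / (c₀ * m) := by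
      have := hlown.trans hbestn
      rw [habs] at this
      push_cast at this ⊢
      linarith [hDxi_le]
    have hs : (0:ℝ) < (q n : ℝ) + (q (n+1) : ℝ) := by
      have : 1 ≤ q n := hq0 ▸ hqmono.monotone (Nat.zero_le n)
      have h1 : (1:ℝ) ≤ (q n : ℝ) := by exact_mod_cast this
      have h2 : (0:ℝ) ≤ (q (n+1) : ℝ) := Nat.cast_nonneg _
      linarith
    have : c₀ * (m:ℝ) / ((q n : ℝ) + (q (n+1) : ℝ)) < K := by
      rw [div_lt_iff₀ hs]
      rw [div_lt_div_iff₀ hs hcm] at hchain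
      linarith
    calc min (q n : ℝ) (c₀ * (m:ℝ) / ((q n : ℝ) + (q (n+1) : ℝ)))
        ≤ c₀ * (m:ℝ) / ((q n : ℝ) + (q (n+1) : ℝ)) := min_le_right _ _
      _ ≤ (K : ℝ) := le_of_lt this
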